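/- The quaternion matrix equation AX - XB = C has a solution if and only if the quaternion block matrices [[A, C], [0, B]] and [[A, 0], [0, B]] are similar over ℍ. -/
import Mathlib
set_option maxHeartbeats 1000000

open Matrix Quaternion LinearMap Module

private lemma roth_aux_finrank {V : Type*} [AddCommGroup V] [Module ℝ V]
    [FiniteDimensional ℝ V] (U : Submodule ℝ V) (p : V →ₗ[ℝ] V) :
    finrank ℝ (U.map p) + finrank ℝ (U ⊓ ker p : Submodule ℝ V) = finrank ℝ U := by
  have h := LinearMap.finrank_range_add_finrank_ker (p.domRestrict U)
  rw [LinearMap.range_domRestrict, LinearMap.ker_domRestrict] at h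
  rwa [← Submodule.map_comap_subtype, Submodule.finrank_map_subtype_eq]

private lemma roth_aux_key {V : Type*} [AddCommGroup V] [Module ℝ V]
    [FiniteDimensional ℝ V] (f g p : V →ₗ[ℝ] V)
    (hrank : finrank ℝ (ker f) = finrank ℝ (ker g))
    (hinf : ker f ⊓ ker p = ker g ⊓ ker p)
    (hle : (ker f).map p ≤ (ker g).map p) :
    (ker f).map p = (ker g).map p := by
  apply Submodule.eq_of_le_of_finrank_eq hle
  have h1 := roth_aux_finrank (ker f) p
  have h2 := roth_aux_finrank (ker g) p
  rw [hinf, hrank] at h1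
  omega

theorem roth_quaternion {m n : ℕ}
    (A : Matrix (Fin m) (Fin m) ℍ[ℝ]) (B : Matrix (Fin n) (Fin n) ℍ[ℝ])
    (C : Matrix (Fin m) (Fin n) ℍ[ℝ]) :
    (∃ X : Matrix (Fin m) (Fin n) ℍ[ℝ], A * X - X * B = C) ↔
    (∃ S : Matrix (Fin m ⊕ Fin n) (Fin m ⊕ Fin n) ℍ[ℝ], IsUnit S ∧
      fromBlocks A C 0 B * S = S * fromBlocks A 0 0 B) := by
  constructor
  · rintro ⟨X, hX⟩
    refine ⟨fromBlocks 1 (-X) 0 1, ?_, ?_⟩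
    · refine isUnit_iff_exists.mpr ⟨fromBlocks 1 X 0 1, ?_, ?_⟩ <;>
        · rw [fromBlocks_multiply]
          simp [← fromBlocks_one]
    · rw [fromBlocks_multiply, fromBlocks_multiply]
      simp only [Matrix.mul_one, Matrix.one_mul, Matrix.mul_zero, Matrix.zero_mul,
        add_zero, zero_add]
      have h : A * -X + C = -X * B := by
        rw [← hX, Matrix.mul_neg, Matrix.neg_mul]; abel
      rw [h]
  · rintro ⟨S, hS, hMS⟩
    obtain ⟨u, rfl⟩ := hS
    set M : Matrix (Fin m ⊕ Fin n) (Fin m ⊕ Fin n) ℍ[ℝ] := fromBlocks A C 0 B with hM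
    set N : Matrix (Fin m ⊕ Fin n) (Fin m ⊕ Fin n) ℍ[ℝ] := fromBlocks A 0 0 B with hN
    set E : Matrix (Fin m ⊕ Fin n) (Fin m ⊕ Fin n) ℍ[ℝ] := fromBlocks 0 0 0 1 with hE
    set Su := u.val with hSu
    set Si := (u⁻¹).val with hSi
    have hSiu : Si * Su = 1 := u.inv_mul
    have hUSi : Su * Si = 1 := u.mul_inv
    have hEE : E * E = E := by rw [hE, fromBlocks_multiply]; simp
    have hNE : N * E = E * M := by rw [hE, hM, hN, fromBlocks_multiply, fromBlocks_multiply]; simp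
    have hEN : E * N = N * E := by rw [hE, hN, fromBlocks_multiply, fromBlocks_multiply]; simp
    have hMNb : M - N = fromBlocks 0 C 0 0 := by
      rw [hM, hN, sub_eq_add_neg, fromBlocks_neg, fromBlocks_add]; simp
    have hF : (M - N) * E = M - N := by
      rw [hMNb, hE, fromBlocks_multiply]; simp
    set f := mulLeft ℝ M - mulRight ℝ N with hf
    set g := mulLeft ℝ N - mulRight ℝ N with hg
    set p := mulLeft ℝ E with hp
    have hmemf : ∀ Z, Z ∈ ker f ↔ M * Z = Z * N := by
      intro Z
      simp [hf, LinearMap.mem_ker, LinearMap.sub_apply, LinearMap.mulLeft_apply,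
        LinearMap.mulRight_apply, sub_eq_zero]
    have hmemg : ∀ Z, Z ∈ ker g ↔ N * Z = Z * N := by
      intro Z
      simp [hg, LinearMap.mem_ker, LinearMap.sub_apply, LinearMap.mulLeft_apply,
        LinearMap.mulRight_apply, sub_eq_zero]
    have hmemp : ∀ Z, Z ∈ ker p ↔ E * Z = 0 := by
      intro Z; simp [hp, LinearMap.mem_ker, LinearMap.mulLeft_apply]
    have huM : Si * M = N * Si := by
      calc Si * M = Si * M * (Su * Si) := by rw [hUSi, mul_one]
        _ = Si * (M * Su) * Si := by rw [← mul_assoc, mul_assoc Si M Su]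
        _ = Si * (Su * N) * Si := by rw [hMS]
        _ = (Si * Su) * (N * Si) := by rw [← mul_assoc, mul_assoc, mul_assoc]
        _ = N * Si := by rw [hSiu, one_mul]
    let e : Matrix (Fin m ⊕ Fin n) (Fin m ⊕ Fin n) ℍ[ℝ] ≃ₗ[ℝ]
        Matrix (Fin m ⊕ Fin n) (Fin m ⊕ Fin n) ℍ[ℝ] :=
      LinearEquiv.ofLinear (mulLeft ℝ Si) (mulLeft ℝ Su)
        (LinearMap.ext fun Z => show Si * (Su * Z) = Z by rw [← mul_assoc, hSiu, one_mul])
        (LinearMap.ext fun Z => show Su * (Si * Z) = Z by rw [← mul_assoc, hUSi, one_mul])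
    have hmap : (ker f).map (e : _ →ₗ[ℝ] _) = ker g := by
      apply le_antisymm
      · intro z hz
        obtain ⟨Z, hZ, rfl⟩ := Submodule.mem_map.mp hz
        rw [hmemf] at hZ
        rw [hmemg]
        show N * (Si * Z) = Si * Z * N
        rw [← mul_assoc, ← huM, mul_assoc, hZ, mul_assoc]
      · intro z hz
        rw [hmemg] at hz
        refine Submodule.mem_map.mpr ⟨Su * z, ?_, ?_⟩
        · rw [hmemf]
          calc M * (Su * z) = Su * N * z := by rw [← mul_assoc, hMS]
            _ = Su * z * N := by rw [mul_assoc, hz, mul_assoc]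
        · show Si * (Su * z) = z
          rw [← mul_assoc, hSiu, one_mul]
    have hrank : finrank ℝ (ker f) = finrank ℝ (ker g) := by
      rw [← hmap, LinearEquiv.finrank_map_eq]
    have hinf : ker f ⊓ ker p = ker g ⊓ ker p := by
      ext Z
      simp only [Submodule.mem_inf, hmemf, hmemg, hmemp]
      constructor
      · rintro ⟨h1, h2⟩
        refine ⟨?_, h2⟩
        have hMN : (M - N) * Z = 0 := by rw [← hF, mul_assoc, h2, Matrix.mul_zero]
        have h3 : M * Z - N * Z = 0 := by rw [← Matrix.sub_mul, hMN]
        rw [sub_eq_zero] at h3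
        rw [← h3]; exact h1
      · rintro ⟨h1, h2⟩
        refine ⟨?_, h2⟩
        have hMN : (M - N) * Z = 0 := by rw [← hF, mul_assoc, h2, Matrix.mul_zero]
        have h3 : M * Z - N * Z = 0 := by rw [← Matrix.sub_mul, hMN]
        rw [sub_eq_zero] at h3
        rw [h3]; exact h1
    have hle : (ker f).map p ≤ (ker g).map p := by
      intro z hz
      obtain ⟨Z, hZ, rfl⟩ := Submodule.mem_map.mp hz
      rw [hmemf] at hZ
      have hEZg : E * Z ∈ ker g := by
        rw [hmemg, ← mul_assoc, hNE, mul_assoc, hZ, ← mul_assoc]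
      refine Submodule.mem_map.mpr ⟨E * Z, hEZg, ?_⟩
      show E * (E * Z) = p Z
      show E * (E * Z) = E * Z
      rw [← mul_assoc, hEE]
    have hmapeq := roth_aux_key f g p hrank hinf hle
    have hEg : E ∈ (ker g).map p := by
      refine Submodule.mem_map.mpr ⟨E, ?_, ?_⟩
      · rw [hmemg, hEN]
      · show E * E = E; exact hEE
    rw [← hmapeq] at hEg
    obtain ⟨Z, hZ, hEZ⟩ := Submodule.mem_map.mp hEg
    rw [hmemf] at hZ
    replace hEZ : E * Z = E := hEZ
    obtain ⟨P, Q, R, T, rfl⟩ : ∃ P Q R T, Z = fromBlocks P Q R T :=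
      ⟨Z.toBlocks₁₁, Z.toBlocks₁₂, Z.toBlocks₂₁, Z.toBlocks₂₂, (fromBlocks_toBlocks Z).symm⟩
    rw [hE, fromBlocks_multiply] at hEZ
    simp only [Matrix.zero_mul, Matrix.one_mul, add_zero, zero_add] at hEZ
    have hT : T = (1 : Matrix (Fin n) (Fin n) ℍ[ℝ]) := by
      have h := congrArg toBlocks₂₂ hEZ
      simpa [toBlocks_fromBlocks₂₂] using h
    rw [hM, hN, fromBlocks_multiply, fromBlocks_multiply, hT] at hZ
    have hblock := congrArg toBlocks₁₂ hZ
    simp only [toBlocks_fromBlocks₁₂, Matrix.mul_zero, Matrix.mul_one, add_zero, zero_add] at hblock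
    -- hblock : A * Q + C = Q * B  (modulo exact shape)
    refine ⟨-Q, ?_⟩
    rw [Matrix.mul_neg, Matrix.neg_mul, ← hblock]
    abel
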